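/- An (r,s)-loom (A,B) is decomposable if and only if at least one of A, B is not connected, where a hypergraph is connected if the graph on its vertices formed by all pairs contained in a common edge is connected. -/

import Mathlib

set_option linter.unusedSectionVars false
set_option linter.unusedVariables false
set_option maxHeartbeats 1000000


open Finset

variable {V : Type*} [DecidableEq V]

/-- The vertex set of a hypergraph: the union of its edges. -/
def vertsH (H : Set (Finset V)) : Set V := ⋃ e ∈ H, (e : Set V)

/-- `c` is a cover of the hypergraph `H`: it meets every edge. -/
def IsCoverH (H : Set (Finset V)) (c : Finset V) : Prop := ∀ e ∈ H, (c ∩ e).Nonempty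

/-- The covering number of `H` equals `k`. -/
def CoverNumIs (H : Set (Finset V)) (k : ℕ) : Prop :=
  (∃ c, IsCoverH H c ∧ c.card = k) ∧ ∀ c, IsCoverH H c → k ≤ c.card

/-- `Ck H k` is the set of covers of `H` of size exactly `k`. -/
def Ck (H : Set (Finset V)) (k : ℕ) : Set (Finset V) := {c | c.card = k ∧ IsCoverH H c}

/-- `H` is `r`-uniform. -/
def UniformH (H : Set (Finset V)) (r : ℕ) : Prop := ∀ e ∈ H, e.card = r

/-- Orthogonality of hypergraphs: every pair of edges meets in exactly one vertex. -/
def OrthH (A B : Set (Finset V)) : Prop := ∀ a ∈ A, ∀ b ∈ B, (a ∩ b).card = 1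

/-- An `(r,s)`-loom. -/
def IsLoom (r s : ℕ) (A B : Set (Finset V)) : Prop :=
  1 ≤ r ∧ 1 ≤ s ∧ OrthH A B ∧ UniformH A r ∧ UniformH B s ∧
    CoverNumIs A s ∧ CoverNumIs B r ∧ A = Ck B r ∧ B = Ck A s
/-- The join of two hypergraphs. -/
def joinH (A C : Set (Finset V)) : Set (Finset V) := {x | ∃ a ∈ A, ∃ c ∈ C, x = a ∪ c}
/-- The 1-skeleton of a hypergraph: two vertices are adjacent if distinct
and contained in a common edge. -/
def hGraph (H : Set (Finset V)) : SimpleGraph V where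
  Adj u v := u ≠ v ∧ ∃ e ∈ H, u ∈ e ∧ v ∈ e
  symm := by
    constructor
    rintro u v ⟨huv, e, he, hu, hv⟩
    exact ⟨huv.symm, e, he, hv, hu⟩
  loopless := by
    constructor
    rintro v ⟨hv, -⟩
    exact hv rfl

/-- A hypergraph is connected if its 1-skeleton is connected on its vertex set. -/
def ConnH (H : Set (Finset V)) : Prop :=
  ∀ u ∈ vertsH H, ∀ v ∈ vertsH H, (hGraph H).Reachable u v
/-- A pair of hypergraphs is decomposable if it is a 1-composition or a
2-composition of two looms on disjoint vertex sets. -/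
def Decomposable (A B : Set (Finset V)) : Prop :=
  (∃ (a c b : ℕ) (A1 B1 A2 B2 : Set (Finset V)),
      IsLoom a b A1 B1 ∧ IsLoom c b A2 B2 ∧
      Disjoint (vertsH A1 ∪ vertsH B1) (vertsH A2 ∪ vertsH B2) ∧
      A = joinH A1 A2 ∧ B = B1 ∪ B2) ∨
  (∃ (a b d : ℕ) (A1 B1 A2 B2 : Set (Finset V)),
      IsLoom a b A1 B1 ∧ IsLoom a d A2 B2 ∧
      Disjoint (vertsH A1 ∪ vertsH B1) (vertsH A2 ∪ vertsH B2) ∧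
      A = A1 ∪ A2 ∧ B = joinH B1 B2)

lemma mem_vertsH {H : Set (Finset V)} {x : V} : x ∈ vertsH H ↔ ∃ e, e ∈ H ∧ x ∈ e := by
  simp [vertsH]
lemma vertsH_union {X Y : Set (Finset V)} : vertsH (X ∪ Y) = vertsH X ∪ vertsH Y := by
  ext x; simp [mem_vertsH, or_and_right, exists_or]

lemma edge_subset_vertsH {H : Set (Finset V)} {e : Finset V} (he : e ∈ H) :
    (e : Set V) ⊆ vertsH H := fun x hx => mem_vertsH.2 ⟨e, he, hx⟩

lemma coverNum_exists {H : Set (Finset V)} (c : Finset V) (hc : IsCoverH H c) :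
    ∃ k, CoverNumIs H k := by
  set S : Set ℕ := {n | ∃ d : Finset V, IsCoverH H d ∧ d.card = n} with hS
  have hne : S.Nonempty := ⟨c.card, c, hc, rfl⟩
  refine ⟨sInf S, ?_, fun d hd => Nat.sInf_le ⟨d, hd, rfl⟩⟩
  exact Nat.sInf_mem hne

lemma cover_subset_verts {H : Set (Finset V)} {k : ℕ} (hk : CoverNumIs H k)
    {c : Finset V} (hc : IsCoverH H c) (hcard : c.card = k) : (c : Set V) ⊆ vertsH H := by
  intro x hx
  rw [Finset.mem_coe] at hx
  by_contra hxv
  have hcov : IsCoverH H (c.erase x) := by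
    intro e he
    obtain ⟨y, hy⟩ := hc e he
    rw [Finset.mem_inter] at hy
    have hyx : y ≠ x := fun h => hxv (h ▸ edge_subset_vertsH he hy.2)
    exact ⟨y, Finset.mem_inter.2 ⟨Finset.mem_erase.2 ⟨hyx, hy.1⟩, hy.2⟩⟩
  have h1 := hk.2 _ hcov
  have h2 : (c.erase x).card = c.card - 1 := Finset.card_erase_of_mem hx
  have h3 : 1 ≤ c.card := Finset.card_pos.2 ⟨x, hx⟩
  omega

lemma loom_symm {r s : ℕ} {A B : Set (Finset V)} (h : IsLoom r s A B) : IsLoom s r B A := by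
  obtain ⟨hr, hs, ho, hA, hB, hcA, hcB, hAck, hBck⟩ := h
  exact ⟨hs, hr, fun b hb a ha => by rw [Finset.inter_comm]; exact ho a ha b hb,
    hB, hA, hcB, hcA, hBck, hAck⟩

lemma loom_B_edge_nonempty {r s : ℕ} {A B : Set (Finset V)} (h : IsLoom r s A B) :
    B.Nonempty := by
  by_contra hBe
  rw [Set.not_nonempty_iff_eq_empty] at hBe
  have hcov : IsCoverH B (∅ : Finset V) := by intro e he; rw [hBe] at he; exact he.elim
  have := h.2.2.2.2.2.2.1.2 _ hcov
  have hr := h.1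
  simp at this
  omega

lemma loom_B_verts_nonempty {r s : ℕ} {A B : Set (Finset V)} (h : IsLoom r s A B) :
    (vertsH B).Nonempty := by
  obtain ⟨b, hb⟩ := loom_B_edge_nonempty h
  have hcard := h.2.2.2.2.1 b hb
  have : b.Nonempty := Finset.card_pos.1 (by rw [hcard]; exact h.2.1)
  obtain ⟨x, hx⟩ := this
  exact ⟨x, mem_vertsH.2 ⟨b, hb, hx⟩⟩

lemma loom_A_mem {r s : ℕ} {A B : Set (Finset V)} (h : IsLoom r s A B) :
    ∃ a, a ∈ A := by
  obtain ⟨c, hc, hcard⟩ := h.2.2.2.2.2.2.1.1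
  exact ⟨c, h.2.2.2.2.2.2.2.1 ▸ ⟨hcard, hc⟩⟩

lemma split_le {B1 B2 : Set (Finset V)} {r1 r2 : ℕ} {a : Finset V}
    (hdisj : Disjoint (vertsH B1) (vertsH B2))
    (h1 : CoverNumIs B1 r1) (h2 : CoverNumIs B2 r2)
    (hc1 : IsCoverH B1 a) (hc2 : IsCoverH B2 a) :
    r1 + r2 ≤ a.card := by
  classical
  set t1 := a.filter (fun x => x ∈ vertsH B1) with ht1
  set t2 := a.filter (fun x => x ∈ vertsH B2) with ht2
  have cov1 : IsCoverH B1 t1 := by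
    intro b hb
    obtain ⟨y, hy⟩ := hc1 b hb
    rw [Finset.mem_inter] at hy
    exact ⟨y, Finset.mem_inter.2 ⟨Finset.mem_filter.2 ⟨hy.1, edge_subset_vertsH hb hy.2⟩, hy.2⟩⟩
  have cov2 : IsCoverH B2 t2 := by
    intro b hb
    obtain ⟨y, hy⟩ := hc2 b hb
    rw [Finset.mem_inter] at hy
    exact ⟨y, Finset.mem_inter.2 ⟨Finset.mem_filter.2 ⟨hy.1, edge_subset_vertsH hb hy.2⟩, hy.2⟩⟩
  have hd : Disjoint t1 t2 := by
    rw [Finset.disjoint_left]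
    intro x hx1 hx2
    exact Set.disjoint_left.1 hdisj (Finset.mem_filter.1 hx1).2 (Finset.mem_filter.1 hx2).2
  have hle1 := h1.2 _ cov1
  have hle2 := h2.2 _ cov2
  have hcard : t1.card + t2.card = (t1 ∪ t2).card := (Finset.card_union_of_disjoint hd).symm
  have hsub : t1 ∪ t2 ⊆ a := Finset.union_subset (Finset.filter_subset _ _) (Finset.filter_subset _ _)
  have := Finset.card_le_card hsub
  omega

lemma split_eq {B1 B2 : Set (Finset V)} {r1 r2 : ℕ} {a : Finset V}
    (hdisj : Disjoint (vertsH B1) (vertsH B2))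
    (h1 : CoverNumIs B1 r1) (h2 : CoverNumIs B2 r2)
    (hc1 : IsCoverH B1 a) (hc2 : IsCoverH B2 a)
    (hsub : (a : Set V) ⊆ vertsH B1 ∪ vertsH B2)
    (hcard : a.card = r1 + r2) :
    ∃ a1 a2 : Finset V, a1 ∈ Ck B1 r1 ∧ a2 ∈ Ck B2 r2 ∧ a = a1 ∪ a2 := by
  classical
  set t1 := a.filter (fun x => x ∈ vertsH B1) with ht1
  set t2 := a.filter (fun x => x ∈ vertsH B2) with ht2
  have cov1 : IsCoverH B1 t1 := by
    intro b hb
    obtain ⟨y, hy⟩ := hc1 b hb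
    rw [Finset.mem_inter] at hy
    exact ⟨y, Finset.mem_inter.2 ⟨Finset.mem_filter.2 ⟨hy.1, edge_subset_vertsH hb hy.2⟩, hy.2⟩⟩
  have cov2 : IsCoverH B2 t2 := by
    intro b hb
    obtain ⟨y, hy⟩ := hc2 b hb
    rw [Finset.mem_inter] at hy
    exact ⟨y, Finset.mem_inter.2 ⟨Finset.mem_filter.2 ⟨hy.1, edge_subset_vertsH hb hy.2⟩, hy.2⟩⟩
  have hd : Disjoint t1 t2 := by
    rw [Finset.disjoint_left]
    intro x hx1 hx2
    exact Set.disjoint_left.1 hdisj (Finset.mem_filter.1 hx1).2 (Finset.mem_filter.1 hx2).2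
  have hun : a = t1 ∪ t2 := by
    apply Finset.Subset.antisymm
    · intro x hx
      rcases hsub hx with h | h
      · exact Finset.mem_union.2 (Or.inl (Finset.mem_filter.2 ⟨hx, h⟩))
      · exact Finset.mem_union.2 (Or.inr (Finset.mem_filter.2 ⟨hx, h⟩))
    · exact Finset.union_subset (Finset.filter_subset _ _) (Finset.filter_subset _ _)
  have hle1 := h1.2 _ cov1
  have hle2 := h2.2 _ cov2
  have hcards : t1.card + t2.card = a.card := by
    rw [hun]; exact (Finset.card_union_of_disjoint hd).symm
  have e1 : t1.card = r1 := by omega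
  have e2 : t2.card = r2 := by omega
  exact ⟨t1, t2, ⟨e1, cov1⟩, ⟨e2, cov2⟩, hun⟩


lemma reach_stay {B1 B2 : Set (Finset V)} (hd : Disjoint (vertsH B1) (vertsH B2)) :
    ∀ {x y : V}, (hGraph (B1 ∪ B2)).Reachable x y → x ∈ vertsH B1 → y ∈ vertsH B1 := by
  intro x y h
  obtain ⟨w⟩ := h
  induction w with
  | nil => exact id
  | cons hadj p ih =>
    intro hu
    obtain ⟨-, e, he, hue, hve⟩ := hadj
    apply ih
    rcases he with h | h
    · exact mem_vertsH.2 ⟨e, h, hve⟩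
    · exact absurd hu (Set.disjoint_right.1 hd (mem_vertsH.2 ⟨e, h, hue⟩))

lemma not_conn_of_split {B1 B2 : Set (Finset V)}
    (hd : Disjoint (vertsH B1) (vertsH B2))
    (h1 : (vertsH B1).Nonempty) (h2 : (vertsH B2).Nonempty) :
    ¬ ConnH (B1 ∪ B2) := by
  intro hc
  obtain ⟨u, hu⟩ := h1
  obtain ⟨v, hv⟩ := h2
  have hu' : u ∈ vertsH (B1 ∪ B2) := by rw [vertsH_union]; exact Or.inl hu
  have hv' : v ∈ vertsH (B1 ∪ B2) := by rw [vertsH_union]; exact Or.inr hv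
  have := reach_stay hd (hc u hu' v hv') hu
  exact Set.disjoint_left.1 hd this hv

lemma side {r s r1 r2 : ℕ} {A B B1 B2 : Set (Finset V)}
    (hL : IsLoom r s A B)
    (hB : B = B1 ∪ B2)
    (hdisj : Disjoint (vertsH B1) (vertsH B2))
    (habs : ∀ b ∈ B, (∃ x ∈ b, x ∈ vertsH B1) → b ∈ B1)
    (hne : B1.Nonempty)
    (h1 : CoverNumIs B1 r1) (h2 : CoverNumIs B2 r2)
    (htau : r1 + r2 = r) :
    IsLoom r1 s (Ck B1 r1) B1 := by
  obtain ⟨hr, hs, horth, hAu, hBu, hcA, hcB, hAck, hBck⟩ := hL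
  have hB1sub : B1 ⊆ B := by rw [hB]; exact Set.subset_union_left
  have hB2sub : B2 ⊆ B := by rw [hB]; exact Set.subset_union_right
  have hr1 : 1 ≤ r1 := by
    rcases Nat.eq_zero_or_pos r1 with h0 | h
    · obtain ⟨c, hcov, hcard⟩ := h1.1
      obtain ⟨b0, hb0⟩ := hne
      obtain ⟨y, hy⟩ := hcov b0 hb0
      rw [Finset.mem_inter] at hy
      have hce : c = ∅ := Finset.card_eq_zero.1 (by rw [hcard, h0])
      rw [hce] at hy
      exact absurd hy.1 (Finset.notMem_empty y)
    · exact h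
  obtain ⟨c2, hc2cov, hc2card⟩ := h2.1
  have hc2v : (c2 : Set V) ⊆ vertsH B2 := cover_subset_verts h2 hc2cov hc2card
  have key1 : ∀ a1 ∈ Ck B1 r1, a1 ∪ c2 ∈ A := by
    rintro a1 ⟨hcard1, hcov1⟩
    have ha1v : (a1 : Set V) ⊆ vertsH B1 := cover_subset_verts h1 hcov1 hcard1
    rw [hAck]
    constructor
    · rw [Finset.card_union_of_disjoint, hcard1, hc2card, htau]
      rw [Finset.disjoint_left]; intro x hx1 hx2
      exact Set.disjoint_left.1 hdisj (ha1v hx1) (hc2v hx2)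
    · intro b hb
      rw [hB] at hb
      rcases hb with hb | hb
      · obtain ⟨y, hy⟩ := hcov1 b hb
        rw [Finset.mem_inter] at hy
        exact ⟨y, Finset.mem_inter.2 ⟨Finset.mem_union.2 (Or.inl hy.1), hy.2⟩⟩
      · obtain ⟨y, hy⟩ := hc2cov b hb
        rw [Finset.mem_inter] at hy
        exact ⟨y, Finset.mem_inter.2 ⟨Finset.mem_union.2 (Or.inr hy.1), hy.2⟩⟩
  have keyOrth : OrthH (Ck B1 r1) B1 := by
    rintro a1 ha1 b hb
    have horth' := horth _ (key1 a1 ha1) b (hB1sub hb)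
    have heq : (a1 ∪ c2) ∩ b = a1 ∩ b := by
      ext x
      simp only [Finset.mem_inter, Finset.mem_union]
      constructor
      · rintro ⟨hx | hx, hxb⟩
        · exact ⟨hx, hxb⟩
        · exact absurd (edge_subset_vertsH hb hxb)
            (Set.disjoint_right.1 hdisj (hc2v hx))
      · rintro ⟨h1x, h2x⟩; exact ⟨Or.inl h1x, h2x⟩
    rwa [heq] at horth'
  have keyfilter : ∀ a ∈ A, ∃ a1, a1 ∈ Ck B1 r1 ∧ a1 ⊆ a := by
    intro a ha
    rw [hAck] at ha
    obtain ⟨hacard, hacov⟩ := ha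
    have hav : (a : Set V) ⊆ vertsH B := cover_subset_verts hcB hacov hacard
    have hsub : (a : Set V) ⊆ vertsH B1 ∪ vertsH B2 := by
      rw [← vertsH_union, ← hB]; exact hav
    obtain ⟨a1, a2, ha1, ha2, heq⟩ := split_eq hdisj h1 h2
      (fun b hb => hacov b (hB1sub hb)) (fun b hb => hacov b (hB2sub hb)) hsub
      (by rw [hacard, htau])
    exact ⟨a1, ha1, heq ▸ Finset.subset_union_left⟩
  have keyB1cov : ∀ b ∈ B1, IsCoverH (Ck B1 r1) b := by
    intro b hb a1 ha1
    have hco := keyOrth a1 ha1 b hb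
    obtain ⟨y, hy⟩ := Finset.card_pos.1 (by rw [hco]; norm_num)
    rw [Finset.mem_inter] at hy
    exact ⟨y, Finset.mem_inter.2 ⟨hy.2, hy.1⟩⟩
  have keycov : ∀ c, IsCoverH (Ck B1 r1) c → IsCoverH A c := by
    intro c hc a ha
    obtain ⟨a1, ha1, hsub⟩ := keyfilter a ha
    obtain ⟨y, hy⟩ := hc a1 ha1
    rw [Finset.mem_inter] at hy
    exact ⟨y, Finset.mem_inter.2 ⟨hy.1, hsub hy.2⟩⟩
  obtain ⟨b0, hb0⟩ := hne
  refine ⟨hr1, hs, keyOrth, fun e he => he.1, fun e he => hBu e (hB1sub he), ?_, h1, rfl, ?_⟩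
  · exact ⟨⟨b0, keyB1cov b0 hb0, hBu b0 (hB1sub hb0)⟩, fun c hc => hcA.2 c (keycov c hc)⟩
  · apply Set.Subset.antisymm
    · intro b hb
      exact ⟨hBu b (hB1sub hb), keyB1cov b hb⟩
    · rintro c ⟨hccard, hccov⟩
      have hcB' : c ∈ B := by rw [hBck]; exact ⟨hccard, keycov c hccov⟩
      apply habs c hcB'
      obtain ⟨c1, hc1cov, hc1card⟩ := h1.1
      obtain ⟨y, hy⟩ := hccov c1 ⟨hc1card, hc1cov⟩
      rw [Finset.mem_inter] at hy
      exact ⟨y, hy.1, cover_subset_verts h1 hc1cov hc1card hy.2⟩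

lemma master {r s : ℕ} {A B : Set (Finset V)} (hL : IsLoom r s A B) (hnc : ¬ ConnH B) :
    ∃ (a c b : ℕ) (A1 B1 A2 B2 : Set (Finset V)),
      IsLoom a b A1 B1 ∧ IsLoom c b A2 B2 ∧
      Disjoint (vertsH A1 ∪ vertsH B1) (vertsH A2 ∪ vertsH B2) ∧
      A = joinH A1 A2 ∧ B = B1 ∪ B2 := by
  classical
  unfold ConnH at hnc
  push_neg at hnc
  obtain ⟨u, hu, v, hv, hreach⟩ := hnc
  set V1 : Set V := {x | (hGraph B).Reachable u x} with hV1
  set B1 : Set (Finset V) := {b ∈ B | (b : Set V) ⊆ V1} with hB1d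
  set B2 : Set (Finset V) := {b ∈ B | ¬ (b : Set V) ⊆ V1} with hB2d
  have hAck := hL.2.2.2.2.2.2.2.1
  have hBck := hL.2.2.2.2.2.2.2.2
  have hcB := hL.2.2.2.2.2.2.1
  have hcl : ∀ b ∈ B, ∀ x ∈ b, x ∈ V1 → (b : Set V) ⊆ V1 := by
    intro b hb x hx hxV y hy
    rw [Finset.mem_coe] at hy
    by_cases hxy : y = x
    · rwa [hxy]
    · exact SimpleGraph.Reachable.trans hxV
        (SimpleGraph.Adj.reachable ⟨fun h => hxy h.symm, b, hb, hx, hy⟩)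
  have hBsplit : B = B1 ∪ B2 := by
    ext b; constructor
    · intro hb; by_cases h : (b : Set V) ⊆ V1
      · exact Or.inl ⟨hb, h⟩
      · exact Or.inr ⟨hb, h⟩
    · rintro (⟨hb, -⟩ | ⟨hb, -⟩) <;> exact hb
  have hB1sub : B1 ⊆ B := fun b hb => hb.1
  have hB2sub : B2 ⊆ B := fun b hb => hb.1
  have hv1 : vertsH B1 ⊆ V1 := by
    intro x hx
    obtain ⟨b, hb, hxb⟩ := mem_vertsH.1 hx
    exact hb.2 hxb
  have hv2 : ∀ x ∈ vertsH B2, x ∉ V1 := by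
    intro x hx hxV
    obtain ⟨b, hb, hxb⟩ := mem_vertsH.1 hx
    exact hb.2 (hcl b hb.1 x hxb hxV)
  have hdisj : Disjoint (vertsH B1) (vertsH B2) := by
    rw [Set.disjoint_left]; intro x hx1 hx2; exact hv2 x hx2 (hv1 hx1)
  have habs1 : ∀ b ∈ B, (∃ x ∈ b, x ∈ vertsH B1) → b ∈ B1 := by
    rintro b hb ⟨x, hxb, hxv⟩
    exact ⟨hb, hcl b hb x hxb (hv1 hxv)⟩
  have habs2 : ∀ b ∈ B, (∃ x ∈ b, x ∈ vertsH B2) → b ∈ B2 := by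
    rintro b hb ⟨x, hxb, hxv⟩
    exact ⟨hb, fun hsub => hv2 x hxv (hsub hxb)⟩
  have hne1 : B1.Nonempty := by
    obtain ⟨b, hb, hub⟩ := mem_vertsH.1 hu
    exact ⟨b, hb, hcl b hb u hub (SimpleGraph.Reachable.refl u)⟩
  have hne2 : B2.Nonempty := by
    obtain ⟨b, hb, hvb⟩ := mem_vertsH.1 hv
    exact ⟨b, hb, fun hsub => hreach (hsub hvb)⟩
  obtain ⟨a0, ha0⟩ := loom_A_mem hL
  have ha0' : a0 ∈ Ck B r := by rw [← hAck]; exact ha0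
  have ha0cov : IsCoverH B a0 := ha0'.2
  obtain ⟨r1, h1⟩ := coverNum_exists a0 (fun b hb => ha0cov b (hB1sub hb))
  obtain ⟨r2, h2⟩ := coverNum_exists a0 (fun b hb => ha0cov b (hB2sub hb))
  have htau : r1 + r2 = r := by
    have hle1 : r1 + r2 ≤ r := by
      have := split_le hdisj h1 h2 (fun b hb => ha0cov b (hB1sub hb))
        (fun b hb => ha0cov b (hB2sub hb))
      rw [ha0'.1] at this
      exact this
    have hle2 : r ≤ r1 + r2 := by
      obtain ⟨c1, hc1cov, hc1card⟩ := h1.1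
      obtain ⟨c2, hc2cov, hc2card⟩ := h2.1
      have hcov : IsCoverH B (c1 ∪ c2) := by
        intro b hb
        rw [hBsplit] at hb
        rcases hb with hb | hb
        · obtain ⟨y, hy⟩ := hc1cov b hb
          rw [Finset.mem_inter] at hy
          exact ⟨y, Finset.mem_inter.2 ⟨Finset.mem_union.2 (Or.inl hy.1), hy.2⟩⟩
        · obtain ⟨y, hy⟩ := hc2cov b hb
          rw [Finset.mem_inter] at hy
          exact ⟨y, Finset.mem_inter.2 ⟨Finset.mem_union.2 (Or.inr hy.1), hy.2⟩⟩
      have hge := hcB.2 _ hcov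
      have hcu := Finset.card_union_le c1 c2
      omega
    omega
  have L1 := side hL hBsplit hdisj habs1 hne1 h1 h2 htau
  have L2 := side hL (hBsplit.trans (Set.union_comm _ _)) hdisj.symm habs2 hne2 h2 h1
    (by omega)
  have hA1v : vertsH (Ck B1 r1) ⊆ vertsH B1 := by
    intro x hx
    obtain ⟨a1, ha1, hxa⟩ := mem_vertsH.1 hx
    exact cover_subset_verts h1 ha1.2 ha1.1 hxa
  have hA2v : vertsH (Ck B2 r2) ⊆ vertsH B2 := by
    intro x hx
    obtain ⟨a2, ha2, hxa⟩ := mem_vertsH.1 hx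
    exact cover_subset_verts h2 ha2.2 ha2.1 hxa
  refine ⟨r1, r2, s, Ck B1 r1, B1, Ck B2 r2, B2, L1, L2, ?_, ?_, hBsplit⟩
  · exact Disjoint.mono (Set.union_subset hA1v (subset_refl _))
      (Set.union_subset hA2v (subset_refl _)) hdisj
  · apply Set.Subset.antisymm
    · intro a ha
      have ha' : a ∈ Ck B r := by rw [← hAck]; exact ha
      have hsub : (a : Set V) ⊆ vertsH B1 ∪ vertsH B2 := by
        rw [← vertsH_union, ← hBsplit]
        exact cover_subset_verts hcB ha'.2 ha'.1
      obtain ⟨a1, a2, ha1, ha2, heq⟩ := split_eq hdisj h1 h2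
        (fun b hb => ha'.2 b (hB1sub hb)) (fun b hb => ha'.2 b (hB2sub hb)) hsub
        (by rw [ha'.1, htau])
      exact ⟨a1, ha1, a2, ha2, heq⟩
    · rintro x ⟨a1, ha1, a2, ha2, rfl⟩
      rw [hAck]
      constructor
      · rw [Finset.card_union_of_disjoint, ha1.1, ha2.1, htau]
        rw [Finset.disjoint_left]; intro y hy1 hy2
        exact Set.disjoint_left.1 hdisj (cover_subset_verts h1 ha1.2 ha1.1 hy1)
          (cover_subset_verts h2 ha2.2 ha2.1 hy2)
      · intro b hb
        rw [hBsplit] at hb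
        rcases hb with hb | hb
        · obtain ⟨y, hy⟩ := ha1.2 b hb
          rw [Finset.mem_inter] at hy
          exact ⟨y, Finset.mem_inter.2 ⟨Finset.mem_union.2 (Or.inl hy.1), hy.2⟩⟩
        · obtain ⟨y, hy⟩ := ha2.2 b hb
          rw [Finset.mem_inter] at hy
          exact ⟨y, Finset.mem_inter.2 ⟨Finset.mem_union.2 (Or.inr hy.1), hy.2⟩⟩

/-- a loom is decomposable iff one of its components is not
connected. -/
theorem stmt14 (r s : ℕ) (A B : Set (Finset V)) (hL : IsLoom r s A B) :
    Decomposable A B ↔ (¬ ConnH A ∨ ¬ ConnH B) := by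
  constructor
  · rintro (⟨a, c, b, A1, B1, A2, B2, hL1, hL2, hd, hA, hB⟩ |
      ⟨a, b, d, A1, B1, A2, B2, hL1, hL2, hd, hA, hB⟩)
    · right
      rw [hB]
      exact not_conn_of_split
        (hd.mono (Set.subset_union_right) (Set.subset_union_right))
        (loom_B_verts_nonempty hL1) (loom_B_verts_nonempty hL2)
    · left
      rw [hA]
      exact not_conn_of_split
        (hd.mono (Set.subset_union_left) (Set.subset_union_left))
        (loom_B_verts_nonempty (loom_symm hL1)) (loom_B_verts_nonempty (loom_symm hL2))
  · rintro (hA | hB)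
    · obtain ⟨a, c, b, C1, D1, C2, D2, h1, h2, hd, hBj, hAu⟩ := master (loom_symm hL) hA
      right
      exact ⟨b, a, c, D1, C1, D2, C2, loom_symm h1, loom_symm h2,
        hd.mono (Set.union_comm (vertsH D1) (vertsH C1)).le
          (Set.union_comm (vertsH D2) (vertsH C2)).le, hAu, hBj⟩
    · obtain ⟨a, c, b, A1, B1, A2, B2, h1, h2, hd, hAj, hBu⟩ := master hL hB
      left
      exact ⟨a, c, b, A1, B1, A2, B2, h1, h2, hd, hAj, hBu⟩
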